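/- Let k be a field and M a finite commutative monoid, and let A = MonoidAlgebra k M be its monoid algebra. Then for all σ, τ ∈ M, the trace form of A evaluated on the basis elements satisfies τ_A(single σ 1, single τ 1) = n · 1_k, where n is the number of elements γ ∈ M such that σ * τ * γ = γ. -/

import Mathlib

/-- For a finite commutative monoid `M`, the trace form of the monoid algebra `k[M]`, evaluated
on basis elements `λ_σ`, `λ_τ`, equals `n · 1_k` where `n` is the number of elements `γ ∈ M`
with `σ * τ * γ = γ`. This is the matrix `g^S` of the paper. -/
theorem traceForm_monoidAlgebra_single
    (k M : Type*) [Field k] [CommMonoid M] [Fintype M] [DecidableEq M] (σ τ : M) :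
    Algebra.traceForm k (MonoidAlgebra k M)
        (MonoidAlgebra.single σ (1 : k)) (MonoidAlgebra.single τ (1 : k))
      = ((Finset.univ.filter fun γ : M => σ * τ * γ = γ).card : k) := by
  classical
  let b : Module.Basis M k (MonoidAlgebra k M) := MonoidAlgebra.basis M k
  rw [Algebra.traceForm_apply]
  have hmul : MonoidAlgebra.single σ (1 : k) * MonoidAlgebra.single τ (1 : k)
      = MonoidAlgebra.single (σ * τ) (1 : k) := by
    rw [MonoidAlgebra.single_mul_single, mul_one]
  rw [hmul]
  rw [Algebra.trace_eq_matrix_trace b, Matrix.trace]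
  have hdiag : ∀ γ : M,
      (Algebra.leftMulMatrix b (MonoidAlgebra.single (σ * τ) (1 : k))).diag γ
        = if σ * τ * γ = γ then (1 : k) else 0 := by
    intro γ
    rw [Matrix.diag_apply, Algebra.leftMulMatrix_eq_repr_mul]
    have hb : b γ = MonoidAlgebra.single γ (1 : k) := by
      simp [b, Finsupp.basisSingleOne, Module.Basis.apply_eq_iff]
    rw [hb, MonoidAlgebra.single_mul_single, mul_one]
    show (MonoidAlgebra.single (σ * τ * γ) (1:k)).coeff γ = _
    rw [MonoidAlgebra.coeff_single_apply]
  rw [Finset.sum_congr rfl fun γ _ => hdiag γ]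
  rw [Finset.sum_boole]
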